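/- arXiv:1808.09230 — 2 statements merged into one kernel-verified Lean document; each statement's English description precedes it below -/
import Mathlib

section
/- For every l ∈ ℕ there exist a monotone increasing function c : ℕ → ℕ and a strictly increasing sequence of positive integers (x_i)_{i=1}^∞ such that for every h ∈ ℕ, setting S_h = ∪_{i=1}^{h} [x_i, x_i + 2l], one has: x ≤ c(h) for all x ∈ S_h, and gcd(x, y) ∈ T(l) for all distinct x, y ∈ S_h. -/
/-- `r(p,l)`: the largest `t` with `p ^ t ≤ 2 * l + 1`. -/
def rpl (p l : ℕ) : ℕ := Nat.findGreatest (fun t => p ^ t ≤ 2 * l + 1) (2 * l + 1)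

/-- `T(l)`: products `∏_{p prime, p ≤ 2l+1} p ^ (r_p)` with `0 ≤ r_p ≤ r(p,l)`. -/
def Tset (l : ℕ) : Set ℕ :=
  {m | ∃ r : ℕ → ℕ, (∀ p, r p ≤ rpl p l) ∧
    m = ∏ p ∈ (Finset.range (2 * l + 2)).filter Nat.Prime, p ^ r p}

/-- Product of the minimal prime powers exceeding `2l+1`, over primes `p ≤ N`. -/
def Qf (l N : ℕ) : ℕ := ∏ p ∈ (Finset.range (N + 1)).filter Nat.Prime, p ^ (rpl p l + 1)

/-- The block-start sequence. -/
def xs (l : ℕ) : ℕ → ℕ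
  | 0 => 1
  | h + 1 => Qf l (xs l h + 2 * l) * (xs l h + 1) + 1

lemma rpl_succ_gt {p : ℕ} (hp : p.Prime) (l : ℕ) : 2 * l + 1 < p ^ (rpl p l + 1) := by
  by_contra hle
  push_neg at hle
  have h1 : rpl p l + 1 ≤ p ^ (rpl p l + 1) :=
    le_trans Nat.lt_two_pow_self.le (Nat.pow_le_pow_left hp.two_le _)
  exact Nat.findGreatest_is_greatest (Nat.lt_succ_self _) (le_trans h1 hle) hle

lemma rpl_pos_le {p : ℕ} (l : ℕ) (h : 1 ≤ rpl p l) : p ≤ 2 * l + 1 := by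
  by_contra hgt
  push_neg at hgt
  have h0 : rpl p l = 0 := by
    rw [rpl, Nat.findGreatest_eq_zero_iff]
    intro n hn _ hP
    have : p ≤ p ^ n := Nat.le_self_pow (by omega) p
    omega
  omega

lemma one_le_xs (l h : ℕ) : 1 ≤ xs l h := by
  cases h with
  | zero => simp [xs]
  | succ n => simp [xs]

lemma Qf_pos (l N : ℕ) : 0 < Qf l N := by
  apply Finset.prod_pos
  intro p hp
  simp only [Finset.mem_filter, Finset.mem_range] at hp
  exact pow_pos hp.2.pos _

lemma xs_strictMono (l : ℕ) : StrictMono (xs l) := by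
  apply strictMono_nat_of_lt_succ
  intro n
  show xs l n < Qf l (xs l n + 2 * l) * (xs l n + 1) + 1
  have h1 : 1 ≤ Qf l (xs l n + 2 * l) := Qf_pos l _
  calc xs l n < xs l n + 1 := Nat.lt_succ_self _
    _ ≤ Qf l (xs l n + 2 * l) * (xs l n + 1) := Nat.le_mul_of_pos_left _ h1
    _ < _ := Nat.lt_succ_self _

/-- membership criterion for `Tset`. -/
lemma mem_Tset (l : ℕ) {d : ℕ} (hd : 0 < d) (h : ∀ p, d.factorization p ≤ rpl p l) :
    d ∈ Tset l := by
  refine ⟨fun p => d.factorization p, h, ?_⟩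
  have hsub : d.factorization.support ⊆ (Finset.range (2 * l + 2)).filter Nat.Prime := by
    intro p hp
    have hp' : p.Prime := Nat.prime_of_mem_primeFactors (by simpa [Nat.support_factorization] using hp)
    have h1 : 1 ≤ d.factorization p := by
      have := Finsupp.mem_support_iff.mp hp
      omega
    have hple : p ≤ 2 * l + 1 := rpl_pos_le l (le_trans h1 (h p))
    simp only [Finset.mem_filter, Finset.mem_range]
    exact ⟨by omega, hp'⟩
  calc d = d.factorization.prod (· ^ ·) := (Nat.factorization_prod_pow_eq_self hd.ne').symm
    _ = ∏ p ∈ (Finset.range (2 * l + 2)).filter Nat.Prime, p ^ d.factorization p :=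
        Finsupp.prod_of_support_subset _ hsub _ (fun i _ => pow_zero i)

lemma q_dvd_Qf {p : ℕ} (hp : p.Prime) {l N : ℕ} (hpN : p ≤ N) :
    p ^ (rpl p l + 1) ∣ Qf l N := by
  apply Finset.dvd_prod_of_mem
  simp only [Finset.mem_filter, Finset.mem_range]
  exact ⟨by omega, hp⟩

/-- cross-block gcd bound -/
lemma gcdCrossBlock (l : ℕ) {i j a b : ℕ} (hij : i < j)
    (ha1 : xs l i ≤ a) (ha2 : a ≤ xs l i + 2 * l)
    (hb1 : xs l j ≤ b) (hb2 : b ≤ xs l j + 2 * l) :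
    Nat.gcd a b ∈ Tset l := by
  have ha0 : 0 < a := lt_of_lt_of_le (one_le_xs l i) ha1
  have hd0 : 0 < Nat.gcd a b := Nat.gcd_pos_of_pos_left _ ha0
  apply mem_Tset l hd0
  intro p
  by_contra hcon
  push_neg at hcon
  set d := Nat.gcd a b with hd
  have hp : p.Prime := by
    by_contra hnp
    rw [Nat.factorization_eq_zero_of_not_prime d hnp] at hcon
    omega
  have hqd : p ^ (rpl p l + 1) ∣ d := by
    refine dvd_trans (pow_dvd_pow p hcon) (Nat.ordProj_dvd d p)
  set q := p ^ (rpl p l + 1) with hqdef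
  have hq2l : 2 * l + 1 < q := rpl_succ_gt hp l
  have hqa : q ∣ a := dvd_trans hqd (Nat.gcd_dvd_left a b)
  have hqb : q ∣ b := dvd_trans hqd (Nat.gcd_dvd_right a b)
  have hqle : q ≤ a := Nat.le_of_dvd ha0 hqa
  -- p ≤ xs l (j-1) + 2l
  obtain ⟨j', rfl⟩ : ∃ j', j = j' + 1 := ⟨j - 1, by omega⟩
  have hmono : xs l i ≤ xs l j' := (xs_strictMono l).monotone (by omega)
  have hpN : p ≤ xs l j' + 2 * l := by
    have hpq : p ≤ q := Nat.le_self_pow (by omega) p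
    omega
  have hQ : q ∣ Qf l (xs l j' + 2 * l) := q_dvd_Qf hp hpN
  have hxj : xs l (j' + 1) = Qf l (xs l j' + 2 * l) * (xs l j' + 1) + 1 := rfl
  -- b = Qf * (xs l j' + 1) + 1 + t with t ≤ 2l
  set Q := Qf l (xs l j' + 2 * l) * (xs l j' + 1) with hQdef
  have hb1' : Q + 1 ≤ b := by rw [hxj] at hb1; omega
  have hb2' : b ≤ Q + 1 + 2 * l := by rw [hxj] at hb2; omega
  have hqQ : q ∣ Q := Dvd.dvd.mul_right hQ _
  have hqdiff : q ∣ b - Q := Nat.dvd_sub hqb hqQ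
  have hdiffpos : 0 < b - Q := by omega
  have : q ≤ b - Q := Nat.le_of_dvd hdiffpos hqdiff
  omega

/-- same-block gcd bound -/
lemma gcdSameBlock (l : ℕ) {i a b : ℕ}
    (ha1 : xs l i ≤ a) (ha2 : a ≤ xs l i + 2 * l)
    (hb1 : xs l i ≤ b) (hb2 : b ≤ xs l i + 2 * l) (hab : a ≠ b) :
    Nat.gcd a b ∈ Tset l := by
  have ha0 : 0 < a := lt_of_lt_of_le (one_le_xs l i) ha1
  have hd0 : 0 < Nat.gcd a b := Nat.gcd_pos_of_pos_left _ ha0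
  set d := Nat.gcd a b with hd
  have hdle : d ≤ 2 * l := by
    rcases Nat.lt_or_ge a b with h | h
    · have : d ∣ b - a := Nat.dvd_sub (Nat.gcd_dvd_right a b) (Nat.gcd_dvd_left a b)
      have h1 : d ≤ b - a := Nat.le_of_dvd (by omega) this
      omega
    · have hlt : b < a := lt_of_le_of_ne h (Ne.symm hab)
      have : d ∣ a - b := Nat.dvd_sub (Nat.gcd_dvd_left a b) (Nat.gcd_dvd_right a b)
      have h1 : d ≤ a - b := Nat.le_of_dvd (by omega) this
      omega
  apply mem_Tset l hd0
  intro p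
  by_contra hcon
  push_neg at hcon
  have hp : p.Prime := by
    by_contra hnp
    rw [Nat.factorization_eq_zero_of_not_prime d hnp] at hcon
    omega
  set v := d.factorization p with hv
  have hpv : p ^ v ∣ d := Nat.ordProj_dvd d p
  have h1 : p ^ v ≤ d := Nat.le_of_dvd hd0 hpv
  have h2 : v ≤ p ^ v := le_trans (le_of_lt Nat.lt_two_pow_self) (Nat.pow_le_pow_left hp.two_le _)
  have := Nat.findGreatest_is_greatest (P := fun t => p ^ t ≤ 2 * l + 1) (n := 2 * l + 1)
    (k := v) hcon (by omega)
  exact this (by omega)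

/-- there are an increasing `c : ℕ → ℕ` and a strictly increasing
sequence `(x_i)` of positive integers such that, with
`S_h = ∪_{i=1}^h [x_i, x_i + 2l]`, every element of `S_h` is at most `c h` and
the gcd of any two distinct elements of `S_h` lies in `T(l)`. -/
theorem gcd_in_Tl_blocks (l : ℕ) (hl : 0 < l) :
    ∃ c : ℕ → ℕ, Monotone c ∧ ∃ x : ℕ → ℕ, StrictMono x ∧ (∀ i, 0 < x i) ∧
      ∀ h : ℕ, 0 < h →
        (∀ a ∈ ⋃ i ∈ Finset.range h, Set.Icc (x i) (x i + 2 * l), a ≤ c h) ∧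
        (∀ a ∈ ⋃ i ∈ Finset.range h, Set.Icc (x i) (x i + 2 * l),
         ∀ b ∈ ⋃ i ∈ Finset.range h, Set.Icc (x i) (x i + 2 * l),
            a ≠ b → Nat.gcd a b ∈ Tset l) := by
  refine ⟨fun h => xs l h + 2 * l, ?_, xs l, xs_strictMono l, fun i => one_le_xs l i, ?_⟩
  · intro m n hmn
    have := (xs_strictMono l).monotone hmn
    simp only []
    omega
  · intro h hh
    constructor
    · intro a ha
      simp only [Set.mem_iUnion, Set.mem_Icc, Finset.mem_range] at ha
      obtain ⟨i, hi, ha1, ha2⟩ := ha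
      have := (xs_strictMono l).monotone (le_of_lt hi)
      show a ≤ xs l h + 2 * l
      omega
    · intro a ha b hb hab
      simp only [Set.mem_iUnion, Set.mem_Icc, Finset.mem_range] at ha hb
      obtain ⟨i, hi, ha1, ha2⟩ := ha
      obtain ⟨j, hj, hb1, hb2⟩ := hb
      rcases Nat.lt_trichotomy i j with hij | hij | hij
      · exact gcdCrossBlock l hij ha1 ha2 hb1 hb2
      · subst hij
        exact gcdSameBlock l ha1 ha2 hb1 hb2 hab
      · rw [Nat.gcd_comm]
        exact gcdCrossBlock l hij hb1 hb2 ha1 ha2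
end

section
/- Let l, n ∈ ℕ, let (a_i)_{i=1}^{n} be a sequence in ℕ ∪ {0}, let (u_i)_{i=1}^{n} be a sequence in T(l), and let X = {x_1, x_2, ..., x_n} be a pairwise prime subset of ℕ. Then there exist z ∈ ℕ, a sequence (r_i)_{i=1}^{n} of integers in [0, C(l)], and a sequence (t_i)_{i=1}^{n} in ℕ such that z + r_i = a_i + t_i·x_i·u_i for all i ∈ [1, n]. -/
/-- `C(l) = (2l+1)^(2l+1)`. -/
def Cbound (l : ℕ) : ℕ := (2 * l + 1) ^ (2 * l + 1)

/-- The master modulus `M(l) = ∏_{p ≤ 2l+1 prime} p ^ r(p,l)`. -/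
def Mval (l : ℕ) : ℕ :=
  ∏ p ∈ (Finset.range (2 * l + 2)).filter Nat.Prime, p ^ rpl p l

lemma Mval_pos (l : ℕ) : 0 < Mval l := by
  apply Finset.prod_pos
  intro p hp
  exact pow_pos (Finset.mem_filter.mp hp).2.pos _

lemma dvd_Mval {l u : ℕ} (hu : u ∈ Tset l) : u ∣ Mval l := by
  obtain ⟨r, hr, rfl⟩ := hu
  exact Finset.prod_dvd_prod_of_dvd _ _ (fun p _ => pow_dvd_pow p (hr p))

lemma pow_rpl_le (p l : ℕ) : p ^ rpl p l ≤ 2 * l + 1 := by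
  have h := Nat.findGreatest_spec (P := fun t => p ^ t ≤ 2 * l + 1)
    (n := 2 * l + 1) (m := 0) (Nat.zero_le _) (by simp)
  simpa [rpl] using h

lemma Mval_le (l : ℕ) : Mval l ≤ Cbound l := by
  have hcard : ((Finset.range (2 * l + 2)).filter Nat.Prime).card ≤ 2 * l + 1 := by
    have hsub : (Finset.range (2 * l + 2)).filter Nat.Prime ⊆
        (Finset.range (2 * l + 2)).erase 0 := by
      intro p hp
      rcases Finset.mem_filter.mp hp with ⟨hmem, hpr⟩
      exact Finset.mem_erase.mpr ⟨hpr.ne_zero, hmem⟩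
    calc ((Finset.range (2 * l + 2)).filter Nat.Prime).card
        ≤ ((Finset.range (2 * l + 2)).erase 0).card := Finset.card_le_card hsub
      _ ≤ 2 * l + 1 := by
          rw [Finset.card_erase_of_mem (by simp), Finset.card_range]
          omega
  calc Mval l ≤ ∏ _p ∈ (Finset.range (2 * l + 2)).filter Nat.Prime, (2 * l + 1) :=
        Finset.prod_le_prod (fun _ _ => Nat.zero_le _) (fun p _ => pow_rpl_le p l)
    _ = (2 * l + 1) ^ ((Finset.range (2 * l + 2)).filter Nat.Prime).card := by
        rw [Finset.prod_const]
    _ ≤ Cbound l := Nat.pow_le_pow_right (by omega) hcard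

/-- Key: the gcd of `(∏ x) * M` with `x j * u j` divides `M`, when `x j` is
coprime to all the `x i` in the product. -/
lemma gcd_dvd_Mval {l : ℕ} {X xj uj : ℕ} (hX : 0 < X) (hxj : 0 < xj)
    (huj : uj ∣ Mval l) (hcop : Nat.Coprime xj X) :
    Nat.gcd (X * Mval l) (xj * uj) ∣ Mval l := by
  have hM : Mval l ≠ 0 := (Mval_pos l).ne'
  have huj0 : uj ≠ 0 := by
    rintro rfl
    exact hM (Nat.eq_zero_of_zero_dvd huj)
  have hL0 : X * Mval l ≠ 0 := Nat.mul_ne_zero hX.ne' hM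
  have hm0 : xj * uj ≠ 0 := Nat.mul_ne_zero hxj.ne' huj0
  have hg0 : Nat.gcd (X * Mval l) (xj * uj) ≠ 0 :=
    (Nat.gcd_pos_of_pos_right _ (Nat.pos_of_ne_zero hm0)).ne'
  rw [← Nat.factorization_le_iff_dvd hg0 hM]
  rw [Nat.factorization_gcd hL0 hm0]
  intro p
  simp only [Finsupp.inf_apply]
  rw [Nat.factorization_mul hX.ne' hM, Nat.factorization_mul hxj.ne' huj0]
  simp only [Finsupp.add_apply]
  have hujM : uj.factorization p ≤ (Mval l).factorization p :=
    (Nat.factorization_le_iff_dvd huj0 hM).mpr huj p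
  by_cases hpx : (xj).factorization p = 0
  · exact le_trans inf_le_right (by omega)
  · have hpf : p ∈ xj.primeFactors := by
      rw [← Nat.support_factorization]; exact Finsupp.mem_support_iff.mpr hpx
    have hpprime : p.Prime := Nat.prime_of_mem_primeFactors hpf
    have hpdvd : p ∣ xj := Nat.dvd_of_mem_primeFactors hpf
    have hpX : ¬ p ∣ X := by
      intro hdX
      have h1 : p ∣ 1 := hcop ▸ Nat.dvd_gcd hpdvd hdX
      have := Nat.le_of_dvd one_pos h1
      have := hpprime.two_le
      omega
    have hX0 : X.factorization p = 0 := Nat.factorization_eq_zero_of_not_dvd hpX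
    exact le_trans inf_le_left (by omega)

/-- The inductive congruence-solving lemma, over `ℤ`. -/
lemma key_crt (l n : ℕ) (a u x : Fin n → ℕ) (hu : ∀ i, u i ∈ Tset l)
    (hxpos : ∀ i, 0 < x i)
    (hxcop : ∀ i j, i ≠ j → Nat.Coprime (x i) (x j)) (s : Finset (Fin n)) :
    ∃ z : ℤ, ∀ i ∈ s, ∃ r : ℕ, r ≤ Cbound l ∧
      ((x i * u i : ℕ) : ℤ) ∣ z + (r : ℤ) - (a i : ℤ) := by
  classical
  induction s using Finset.induction_on with
  | empty => exact ⟨0, by simp⟩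
  | @insert j s hj ih =>
    obtain ⟨z, hz⟩ := ih
    set X : ℕ := ∏ i ∈ s, x i with hXdef
    set M : ℕ := Mval l with hMdef
    set L : ℕ := X * M with hLdef
    have hXpos : 0 < X := Finset.prod_pos (fun i _ => hxpos i)
    have hMpos : 0 < M := Mval_pos l
    have hLpos : 0 < L := Nat.mul_pos hXpos hMpos
    have hujM : u j ∣ M := dvd_Mval (hu j)
    have hujpos : 0 < u j := Nat.pos_of_dvd_of_pos hujM hMpos
    have hcop : Nat.Coprime (x j) X :=
      Nat.Coprime.prod_right (fun i hi => hxcop j i (fun h => hj (h ▸ hi)))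
    set m : ℕ := x j * u j with hmdef
    have hmpos : 0 < m := Nat.mul_pos (hxpos j) hujpos
    set d : ℕ := Nat.gcd L m with hddef
    have hdM : d ∣ M := gcd_dvd_Mval hXpos (hxpos j) hujM hcop
    have hdpos : 0 < d := Nat.gcd_pos_of_pos_right _ hmpos
    have hdC : d ≤ Cbound l :=
      le_trans (Nat.le_of_dvd hMpos hdM) (Mval_le l)
    -- choose r as the residue of (a j - z) mod d
    set c : ℤ := (a j : ℤ) - z with hcdef
    set r : ℕ := (c % (d : ℤ)).toNat with hrdef
    have hd0 : (0 : ℤ) < (d : ℤ) := by exact_mod_cast hdpos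
    have hrlt : (c % (d : ℤ)) < (d : ℤ) := Int.emod_lt_of_pos c hd0
    have hrnonneg : 0 ≤ c % (d : ℤ) := Int.emod_nonneg c hd0.ne'
    have hrcast : ((r : ℕ) : ℤ) = c % (d : ℤ) := Int.toNat_of_nonneg hrnonneg
    have hrC : r ≤ Cbound l := by
      have : (r : ℤ) < (d : ℤ) := by rw [hrcast]; exact hrlt
      have : r < d := by exact_mod_cast this
      omega
    -- Bezout
    set q : ℤ := c / (d : ℤ) with hqdef
    have hq : c - (r : ℤ) = (d : ℤ) * q := by
      rw [hrcast, Int.emod_def, hqdef]; ring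
    have hbez : (d : ℤ) = (L : ℤ) * Int.gcdA L m + (m : ℤ) * Int.gcdB L m := by
      have := Int.gcd_eq_gcd_ab (L : ℤ) (m : ℤ)
      rwa [Int.gcd_natCast_natCast] at this
    set k : ℤ := q * Int.gcdA L m with hkdef
    refine ⟨z + k * (L : ℤ), ?_⟩
    intro i hi
    rcases Finset.mem_insert.mp hi with rfl | hi'
    · -- the new index
      refine ⟨r, hrC, ⟨q * (-(Int.gcdB L m)), ?_⟩⟩
      have hmc : ((x i * u i : ℕ) : ℤ) = (m : ℤ) := by rw [hmdef]
      rw [hmc]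
      have hc' : c = (a i : ℤ) - z := hcdef
      linear_combination -hq - q * hbez + (L : ℤ) * hkdef - hc'
    · -- old indices
      obtain ⟨ri, hriC, hridvd⟩ := hz i hi'
      refine ⟨ri, hriC, ?_⟩
      have hdvdL : ((x i * u i : ℕ) : ℤ) ∣ (L : ℤ) := by
        exact_mod_cast Int.natCast_dvd_natCast.mpr
          (mul_dvd_mul (Finset.dvd_prod_of_mem x hi') (dvd_Mval (hu i)))
      have : z + k * (L : ℤ) + (ri : ℤ) - (a i : ℤ)
          = (z + (ri : ℤ) - (a i : ℤ)) + k * (L : ℤ) := by ring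
      rw [this]
      exact dvd_add hridvd (Dvd.dvd.mul_left hdvdL k)

/-- a Diophantine lemma via CRT. -/
theorem diophantine_crt (l n : ℕ) (hl : 0 < l) (hn : 0 < n)
    (a u x : Fin n → ℕ) (hu : ∀ i, u i ∈ Tset l)
    (hxpos : ∀ i, 0 < x i)
    (hxcop : ∀ i j, i ≠ j → Nat.Coprime (x i) (x j)) :
    ∃ z : ℕ, 0 < z ∧ ∃ r t : Fin n → ℕ,
      (∀ i, r i ≤ Cbound l) ∧ (∀ i, 0 < t i) ∧
      ∀ i, z + r i = a i + t i * x i * u i := by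
  classical
  obtain ⟨z, hz⟩ := key_crt l n a u x hu hxpos hxcop Finset.univ
  choose r hrCb hrd using (fun i => hz i (Finset.mem_univ i))
  -- shift z up to make everything positive
  set P : ℕ := ∏ i, (x i * u i) with hPdef
  have hPpos : 0 < P := by
    apply Finset.prod_pos
    intro i _
    have hM := Mval_pos l
    have := Nat.pos_of_dvd_of_pos (dvd_Mval (hu i)) hM
    exact Nat.mul_pos (hxpos i) this
  set B : ℕ := Finset.univ.sup (fun i : Fin n => a i + x i * u i) with hBdef
  set K : ℕ := z.natAbs + B + 1 with hKdef
  set z' : ℤ := z + (K : ℤ) * (P : ℤ) with hz'def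
  have hKP : (K : ℤ) ≤ (K : ℤ) * (P : ℤ) := by
    have : (1 : ℤ) ≤ (P : ℤ) := by exact_mod_cast hPpos
    nlinarith [Int.natCast_nonneg K]
  have hzlb : -(z.natAbs : ℤ) ≤ z := by
    rcases Int.natAbs_eq z with h | h <;> omega
  have hz'big : ∀ i : Fin n, (a i : ℤ) + (x i * u i : ℕ) ≤ z' := by
    intro i
    have hB : a i + x i * u i ≤ B :=
      Finset.le_sup (f := fun i : Fin n => a i + x i * u i) (Finset.mem_univ i)
    have : ((a i + x i * u i : ℕ) : ℤ) ≤ (K : ℤ) - (z.natAbs : ℤ) := by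
      push_cast
      have : (a i + x i * u i : ℕ) ≤ K - z.natAbs - 1 := by omega
      push_cast at this ⊢
      have hK : z.natAbs + 1 ≤ K := by omega
      have h4 : ((K - (z.natAbs + 1) : ℕ) : ℤ) = (K : ℤ) - ((z.natAbs : ℕ) : ℤ) - 1 := by
        rw [Nat.cast_sub hK]; push_cast; ring
      have h5 : ((z.natAbs : ℕ) : ℤ) = |z| := Int.natCast_natAbs z
      linarith [h4, h5, this]
    push_cast at this ⊢
    omega
  have hz'pos : 0 < z' := by
    have := hz'big ⟨0, hn⟩
    have h1 : (0:ℤ) < ((x ⟨0, hn⟩ * u ⟨0, hn⟩ : ℕ) : ℤ) := by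
      have hM := Mval_pos l
      have hupos := Nat.pos_of_dvd_of_pos (dvd_Mval (hu ⟨0, hn⟩)) hM
      exact_mod_cast Nat.mul_pos (hxpos ⟨0, hn⟩) hupos
    have h2 : (0:ℤ) ≤ (a ⟨0, hn⟩ : ℤ) := Int.natCast_nonneg _
    omega
  -- divisibility still holds for z'
  have hdvd' : ∀ i : Fin n, ((x i * u i : ℕ) : ℤ) ∣ z' + (r i : ℤ) - (a i : ℤ) := by
    intro i
    have hPd : ((x i * u i : ℕ) : ℤ) ∣ ((P : ℕ) : ℤ) :=
      Int.natCast_dvd_natCast.mpr (Finset.dvd_prod_of_mem _ (Finset.mem_univ i))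
    have : z' + (r i : ℤ) - (a i : ℤ)
        = (z + (r i : ℤ) - (a i : ℤ)) + (K : ℤ) * (P : ℤ) := by
      rw [hz'def]; ring
    rw [this]
    exact dvd_add (hrd i) (Dvd.dvd.mul_left hPd _)
  -- define t
  have ht : ∀ i : Fin n, ∃ t : ℕ, 0 < t ∧
      z' + (r i : ℤ) = (a i : ℤ) + (t : ℤ) * ((x i * u i : ℕ) : ℤ) := by
    intro i
    obtain ⟨e, he⟩ := hdvd' i
    have hxu : (0:ℤ) < ((x i * u i : ℕ) : ℤ) := by
      have hupos := Nat.pos_of_dvd_of_pos (dvd_Mval (hu i)) (Mval_pos l)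
      exact_mod_cast Nat.mul_pos (hxpos i) hupos
    have hepos : 0 < e := by
      have hbig := hz'big i
      nlinarith [Int.natCast_nonneg (r i)]
    refine ⟨e.toNat, by omega, ?_⟩
    rw [Int.toNat_of_nonneg hepos.le]
    linear_combination he
  choose t htpos hteq using ht
  refine ⟨z'.toNat, by omega, r, t, hrCb, htpos, ?_⟩
  intro i
  have := hteq i
  have hz'toNat : ((z'.toNat : ℕ) : ℤ) = z' := Int.toNat_of_nonneg hz'pos.le
  have goal : ((z'.toNat + r i : ℕ) : ℤ) = ((a i + t i * x i * u i : ℕ) : ℤ) := by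
    push_cast
    push_cast at this hz'toNat
    rw [hz'toNat]
    linarith [this]
  exact_mod_cast goal
end
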